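/- Let x₀ ∈ ℝ^d, and for k = 0, …, K−1 let x_{k+1} = x_k − η g_k where g_k is a random vector with conditional mean ∇f(x_k) and conditional variance at most σ². If f is L-smooth and 4KηL ≤ 1, then for every k ≤ K, E‖x_k − x₀‖² ≤ 3.7 K η² (2K‖∇f(x₀)‖² + σ²). -/

import Mathlib

open MeasureTheory

lemma aux_sq_add (c u v : ℝ) (hc : 1 ≤ c) :
    (u + v) ^ 2 ≤ (1 + 1/(2*c)) * u ^ 2 + (1 + 2*c) * v ^ 2 := by
  have hc0 : (0:ℝ) < c := by linarith
  rw [← mul_le_mul_iff_right₀ (show (0:ℝ) < 2*c by positivity)]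
  field_simp
  nlinarith [sq_nonneg (u - 2*c*v), mul_pos hc0 hc0]

lemma aux_r_bound (c : ℝ) (hc : 1 ≤ c) :
    (1 + 1/(2*c)) * (1 + 1/(4*c)) ^ 2 ≤ 1 + 43/(32*c) := by
  have hc0 : (0:ℝ) < c := by linarith
  have hs1 : 1/c ≤ 1 := by rw [div_le_one hc0]; exact hc
  have hs0 : (0:ℝ) < 1/c := by positivity
  have e1 : 1/(2*c) = (1/c)/2 := by ring
  have e2 : 1/(4*c) = (1/c)/4 := by ring
  have e3 : 43/(32*c) = 43/32*(1/c) := by ring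
  rw [e1, e2, e3]
  nlinarith [mul_nonneg (sub_nonneg.mpr hs1) hs0.le,
    mul_nonneg (mul_nonneg (sub_nonneg.mpr hs1) hs0.le) hs0.le]

lemma aux_exp : Real.exp (43/32) ≤ 4.15 := by
  have h1 : Real.exp (43/32 : ℝ) = Real.exp 1 * Real.exp (11/32) := by
    rw [← Real.exp_add]; norm_num
  have h2 : Real.exp (11/32 : ℝ) * (21/32) ≤ 1 := by
    have h := Real.add_one_le_exp (-(11/32:ℝ))
    rw [Real.exp_neg] at h
    have h3 : Real.exp (11/32:ℝ) * (21/32) ≤ Real.exp (11/32) * (Real.exp (11/32))⁻¹ := by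
      apply mul_le_mul_of_nonneg_left (by linarith) (Real.exp_pos _).le
    rwa [mul_inv_cancel₀ (Real.exp_ne_zero _)] at h3
  have h4 : Real.exp (11/32 : ℝ) ≤ 32/21 := by nlinarith [Real.exp_pos (11/32:ℝ)]
  have h5 := Real.exp_one_lt_d9
  rw [h1]
  nlinarith [Real.exp_pos (1:ℝ), Real.exp_pos (11/32:ℝ)]

lemma aux_integrable_inner {α E : Type*} [NormedAddCommGroup E] [InnerProductSpace ℝ E]
    {m : MeasurableSpace α} {μ : Measure α} {f g : α → E}
    (hf : MemLp f 2 μ) (hg : MemLp g 2 μ) :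
    Integrable (fun x => (inner ℝ (f x) (g x) : ℝ)) μ := by
  have h := L2.integrable_inner (𝕜 := ℝ) (hf.toLp f) (hg.toLp g)
  refine h.congr ?_
  filter_upwards [hf.coeFn_toLp, hg.coeFn_toLp] with x h1 h2
  rw [h1, h2]

lemma aux_integrable_mul {α : Type*} {m : MeasurableSpace α} {μ : Measure α} {f g : α → ℝ}
    (hf : MemLp f 2 μ) (hg : MemLp g 2 μ) :
    Integrable (fun x => f x * g x) μ := by
  have h := aux_integrable_inner hf hg
  simpa [RCLike.inner_apply, conj_trivial, mul_comm] using h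

set_option maxHeartbeats 2000000 in
theorem stmt_18 {d : ℕ} {Ω : Type*} [m0 : MeasurableSpace Ω]
    (μ : Measure Ω) [IsProbabilityMeasure μ]
    (ℱ : ℕ → MeasurableSpace Ω) (hle : ∀ k, ℱ k ≤ m0)
    (f : EuclideanSpace ℝ (Fin d) → ℝ) (hdiff : Differentiable ℝ f)
    (L η σ : ℝ) (K : ℕ)
    (hsmooth : ∀ u v, ‖gradient f u - gradient f v‖ ≤ L * ‖u - v‖)
    (hη : 0 < η) (hL : 0 < L) (hstep : 4 * (K : ℝ) * η * L ≤ 1)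
    (x₀ : EuclideanSpace ℝ (Fin d))
    (x g : ℕ → Ω → EuclideanSpace ℝ (Fin d))
    (hx0 : ∀ ω, x 0 ω = x₀)
    (hstep' : ∀ k ω, x (k + 1) ω = x k ω - η • g k ω)
    (hadapted : ∀ k, Measurable[ℱ k] (x k))
    (hgmeas : ∀ k, Measurable (g k))
    (hgL2 : ∀ k, MemLp (g k) 2 μ)
    (hmean : ∀ k, μ[g k | ℱ k] =ᵐ[μ] fun ω => gradient f (x k ω))
    (hvar : ∀ k, ∀ᵐ ω ∂μ,
      (μ[(fun ω' => ‖g k ω' - gradient f (x k ω')‖ ^ 2) | ℱ k]) ω ≤ σ ^ 2) :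
    ∀ k ≤ K, ∫ ω, ‖x k ω - x₀‖ ^ 2 ∂μ ≤
      3.7 * (K : ℝ) * η ^ 2 * (2 * (K : ℝ) * ‖gradient f x₀‖ ^ 2 + σ ^ 2) := by
  -- trivial case K = 0
  rcases Nat.eq_zero_or_pos K with hK0 | hKpos
  · subst hK0
    intro k hk
    have hk0 : k = 0 := Nat.le_zero.mp hk
    subst hk0
    simp [hx0]
  -- notation
  set G : ℝ := ‖gradient f x₀‖ with hGdef
  set c : ℝ := (K : ℝ) with hcdef
  have hc1 : (1:ℝ) ≤ c := by rw [hcdef]; exact_mod_cast hKpos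
  have hc0 : (0:ℝ) < c := by linarith
  have hG0 : 0 ≤ G := norm_nonneg _
  have hηL : η * L ≤ 1/(4*c) := by
    rw [le_div_iff₀ (by positivity)]
    linarith [hstep]
  have hηL0 : 0 ≤ η * L := by positivity
  -- measurability and continuity
  have mx : ∀ k, Measurable (x k) := fun k => (hadapted k).mono (hle k) le_rfl
  have hgradlip : LipschitzWith (Real.toNNReal L) (gradient f) := by
    rw [lipschitzWith_iff_dist_le_mul]
    intro u v
    rw [dist_eq_norm, dist_eq_norm]
    calc ‖gradient f u - gradient f v‖ ≤ L * ‖u - v‖ := hsmooth u v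
      _ ≤ (Real.toNNReal L) * ‖u - v‖ := by
          apply mul_le_mul_of_nonneg_right (Real.le_coe_toNNReal L) (norm_nonneg _)
  have hgradcont : Continuous (gradient f) := hgradlip.continuous
  have hgradmeas : ∀ k, Measurable fun ω => gradient f (x k ω) :=
    fun k => hgradcont.measurable.comp (mx k)
  have hgradsm : ∀ k, StronglyMeasurable[ℱ k] fun ω => gradient f (x k ω) :=
    fun k => (hgradcont.measurable.comp (hadapted k)).stronglyMeasurable
  -- gradient bound
  have hgradbd : ∀ (u : EuclideanSpace ℝ (Fin d)), ‖gradient f u‖ ≤ G + L * ‖u - x₀‖ := by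
    intro u
    have habel : gradient f u = gradient f x₀ + (gradient f u - gradient f x₀) := by abel
    calc ‖gradient f u‖ = ‖gradient f x₀ + (gradient f u - gradient f x₀)‖ := by rw [← habel]
      _ ≤ ‖gradient f x₀‖ + ‖gradient f u - gradient f x₀‖ := norm_add_le _ _
      _ ≤ G + L * ‖u - x₀‖ := by
          exact add_le_add le_rfl (hsmooth u x₀)
  -- L² membership
  have hxL2 : ∀ k, MemLp (x k) 2 μ := by
    intro k
    induction k with
    | zero =>
      have : x 0 = fun _ => x₀ := funext hx0
      rw [this]; exact memLp_const x₀
    | succ n ih =>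
      have : x (n+1) = fun ω => x n ω - η • g n ω := funext (hstep' n)
      rw [this]
      exact ih.sub ((hgL2 n).const_smul η)
  have hYL2 : ∀ k, MemLp (fun ω => x k ω - x₀) 2 μ :=
    fun k => (hxL2 k).sub (memLp_const x₀)
  have hgradL2 : ∀ k, MemLp (fun ω => gradient f (x k ω)) 2 μ := by
    intro k
    refine MemLp.of_le ((memLp_const G).add ((hYL2 k).norm.const_mul L))
      (hgradmeas k).aestronglyMeasurable ?_
    filter_upwards with ω
    have h1 := hgradbd (x k ω)
    have h2 : ‖G + L * ‖x k ω - x₀‖‖ = G + L * ‖x k ω - x₀‖ := by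
      rw [Real.norm_eq_abs, abs_of_nonneg (by positivity)]
    simpa [h2] using h1
  have heL2 : ∀ k, MemLp (fun ω => g k ω - gradient f (x k ω)) 2 μ :=
    fun k => (hgL2 k).sub (hgradL2 k)
  have haL2 : ∀ k, MemLp (fun ω => x k ω - x₀ - η • gradient f (x k ω)) 2 μ :=
    fun k => (hYL2 k).sub ((hgradL2 k).const_smul η)
  -- integrability
  have hgInt : ∀ k, Integrable (g k) μ := fun k => (hgL2 k).integrable one_le_two
  have hgradInt : ∀ k, Integrable (fun ω => gradient f (x k ω)) μ :=
    fun k => (hgradL2 k).integrable one_le_two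
  have heInt : ∀ k, Integrable (fun ω => g k ω - gradient f (x k ω)) μ :=
    fun k => (heL2 k).integrable one_le_two
  have hY2int : ∀ k, Integrable (fun ω => ‖x k ω - x₀‖ ^ 2) μ := by
    intro k
    exact (memLp_two_iff_integrable_sq_norm (hYL2 k).aestronglyMeasurable).mp (hYL2 k)
  have he2int : ∀ k, Integrable (fun ω => ‖g k ω - gradient f (x k ω)‖ ^ 2) μ := by
    intro k
    exact (memLp_two_iff_integrable_sq_norm (heL2 k).aestronglyMeasurable).mp (heL2 k)
  have ha2int : ∀ k, Integrable (fun ω => ‖x k ω - x₀ - η • gradient f (x k ω)‖ ^ 2) μ := by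
    intro k
    exact (memLp_two_iff_integrable_sq_norm (haL2 k).aestronglyMeasurable).mp (haL2 k)
  have hinnerInt : ∀ k, Integrable (fun ω =>
      (inner ℝ (x k ω - x₀ - η • gradient f (x k ω)) (g k ω - gradient f (x k ω)) : ℝ)) μ :=
    fun k => aux_integrable_inner (haL2 k) (heL2 k)
  -- conditional mean of the error is zero
  have hcond : ∀ k, μ[fun ω => g k ω - gradient f (x k ω) | ℱ k] =ᵐ[μ] 0 := by
    intro k
    have h1 : (fun ω => g k ω - gradient f (x k ω)) =
        (g k) - (fun ω => gradient f (x k ω)) := rfl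
    rw [h1]
    refine (condExp_sub (hgInt k) (hgradInt k) (ℱ k)).trans ?_
    have h2 : μ[fun ω => gradient f (x k ω) | ℱ k] = fun ω => gradient f (x k ω) :=
      condExp_of_stronglyMeasurable (hle k) (hgradsm k) (hgradInt k)
    filter_upwards [hmean k] with ω hω
    simp only [Pi.sub_apply, Pi.zero_apply, h2, hω]
    exact sub_self _
  -- coordinatewise conditional mean zero
  have hcondi : ∀ k (i : Fin d),
      μ[fun ω => (g k ω - gradient f (x k ω)) i | ℱ k] =ᵐ[μ] 0 := by
    intro k i
    have heiInt : Integrable (fun ω => (g k ω - gradient f (x k ω)) i) μ := by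
      have := (ContinuousLinearMap.comp_memLp' (EuclideanSpace.proj (𝕜 := ℝ) i)
        (heL2 k)).integrable one_le_two
      exact this
    refine (ae_eq_condExp_of_forall_setIntegral_eq (hle k) heiInt
      (fun s _ _ => (integrable_zero _ _ _).integrableOn)
      (fun s hs hμs => ?_) (stronglyMeasurable_const.aestronglyMeasurable)).symm
    have hsm : MeasurableSet s := hle k s hs
    have h1 : ∫ ω in s, (g k ω - gradient f (x k ω)) i ∂μ
        = (EuclideanSpace.proj (𝕜 := ℝ) i) (∫ ω in s, (g k ω - gradient f (x k ω)) ∂μ) :=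
      ContinuousLinearMap.integral_comp_comm (EuclideanSpace.proj (𝕜 := ℝ) i)
        ((heInt k).integrableOn)
    have h2 : ∫ ω in s, (g k ω - gradient f (x k ω)) ∂μ = 0 := by
      rw [← setIntegral_condExp (hle k) (heInt k) hs]
      rw [setIntegral_congr_ae hsm ((hcond k).mono fun ω hω _ => hω)]
      simp
    rw [h1, h2, map_zero]
    simp
  -- cross term is zero
  have hcross : ∀ k, ∫ ω,
      (inner ℝ (x k ω - x₀ - η • gradient f (x k ω)) (g k ω - gradient f (x k ω)) : ℝ) ∂μ = 0 := by
    intro k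
    have hinner_eq : ∀ ω, (inner ℝ (x k ω - x₀ - η • gradient f (x k ω))
        (g k ω - gradient f (x k ω)) : ℝ)
        = ∑ i : Fin d, (x k ω - x₀ - η • gradient f (x k ω)) i
            * (g k ω - gradient f (x k ω)) i := by
      intro ω
      rw [PiLp.inner_apply]
      simp [RCLike.inner_apply, conj_trivial, mul_comm]
    rw [integral_congr_ae (Filter.Eventually.of_forall hinner_eq)]
    have haiL2 : ∀ i : Fin d, MemLp (fun ω => (x k ω - x₀ - η • gradient f (x k ω)) i) 2 μ :=
      fun i => (ContinuousLinearMap.comp_memLp' (EuclideanSpace.proj (𝕜 := ℝ) i) (haL2 k))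
    have heiL2 : ∀ i : Fin d, MemLp (fun ω => (g k ω - gradient f (x k ω)) i) 2 μ :=
      fun i => (ContinuousLinearMap.comp_memLp' (EuclideanSpace.proj (𝕜 := ℝ) i) (heL2 k))
    have hterm : ∀ i : Fin d, Integrable (fun ω =>
        (x k ω - x₀ - η • gradient f (x k ω)) i * (g k ω - gradient f (x k ω)) i) μ :=
      fun i => aux_integrable_mul (haiL2 i) (heiL2 i)
    rw [integral_finset_sum Finset.univ (fun i _ => hterm i)]
    refine Finset.sum_eq_zero fun i _ => ?_
    -- each coordinate integral vanishes
    have haism : StronglyMeasurable[ℱ k] fun ω => (x k ω - x₀ - η • gradient f (x k ω)) i := by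
      have hxm : Measurable[ℱ k] fun ω => x k ω - x₀ - η • gradient f (x k ω) := by
        exact ((hadapted k).sub measurable_const).sub
          ((hgradcont.measurable.comp (hadapted k)).const_smul η)
      exact ((EuclideanSpace.proj (𝕜 := ℝ) i).continuous.measurable.comp hxm).stronglyMeasurable
    have hmul := condExp_mul_of_stronglyMeasurable_left (m := ℱ k) (μ := μ) haism
      (hterm i) ((heiL2 i).integrable one_le_two)
    rw [← integral_condExp (hle k)]
    have hzero : μ[fun ω => (x k ω - x₀ - η • gradient f (x k ω)) i
        * (g k ω - gradient f (x k ω)) i | ℱ k] =ᵐ[μ] 0 := by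
      refine Filter.EventuallyEq.trans hmul ?_
      filter_upwards [hcondi k i] with ω hω
      simp only [Pi.zero_apply] at hω
      simp only [Pi.mul_apply, Pi.zero_apply, hω, mul_zero]
    rw [integral_congr_ae hzero]
    simp
  -- variance bound
  have hvarInt : ∀ k, ∫ ω, ‖g k ω - gradient f (x k ω)‖ ^ 2 ∂μ ≤ σ ^ 2 := by
    intro k
    rw [← integral_condExp (hle k)]
    calc ∫ ω, (μ[fun ω' => ‖g k ω' - gradient f (x k ω')‖ ^ 2 | ℱ k]) ω ∂μ
        ≤ ∫ _ω, σ ^ 2 ∂μ := integral_mono_ae integrable_condExp (integrable_const _) (hvar k)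
      _ = σ ^ 2 := by simp
  -- one-step expansion
  have hDsucc : ∀ k, ∫ ω, ‖x (k+1) ω - x₀‖ ^ 2 ∂μ
      = (∫ ω, ‖x k ω - x₀ - η • gradient f (x k ω)‖ ^ 2 ∂μ)
        + η ^ 2 * ∫ ω, ‖g k ω - gradient f (x k ω)‖ ^ 2 ∂μ := by
    intro k
    have hpt : ∀ ω, ‖x (k+1) ω - x₀‖ ^ 2
        = ‖x k ω - x₀ - η • gradient f (x k ω)‖ ^ 2
          - 2 * η * (inner ℝ (x k ω - x₀ - η • gradient f (x k ω))
              (g k ω - gradient f (x k ω)) : ℝ)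
          + η ^ 2 * ‖g k ω - gradient f (x k ω)‖ ^ 2 := by
      intro ω
      have h0 : x (k+1) ω - x₀
          = (x k ω - x₀ - η • gradient f (x k ω)) - η • (g k ω - gradient f (x k ω)) := by
        rw [hstep' k ω]
        module
      rw [h0, norm_sub_sq_real, real_inner_smul_right, norm_smul, Real.norm_eq_abs,
        abs_of_pos hη, mul_pow]
      ring
    have hint1 : Integrable (fun ω => ‖x k ω - x₀ - η • gradient f (x k ω)‖ ^ 2
        - 2 * η * (inner ℝ (x k ω - x₀ - η • gradient f (x k ω))
            (g k ω - gradient f (x k ω)) : ℝ)) μ :=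
      (ha2int k).sub ((hinnerInt k).const_mul (2*η))
    have hint2 : Integrable (fun ω => η ^ 2 * ‖g k ω - gradient f (x k ω)‖ ^ 2) μ :=
      (he2int k).const_mul (η^2)
    have hint3 : Integrable (fun ω => 2 * η * (inner ℝ (x k ω - x₀ - η • gradient f (x k ω))
        (g k ω - gradient f (x k ω)) : ℝ)) μ := (hinnerInt k).const_mul (2*η)
    rw [integral_congr_ae (Filter.Eventually.of_forall hpt)]
    rw [integral_add hint1 hint2]
    rw [integral_sub (ha2int k) hint3]
    rw [integral_const_mul, integral_const_mul, hcross k, mul_zero, sub_zero]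
  -- integrated deterministic bound
  have hstep2 : ∀ k, ∫ ω, ‖x k ω - x₀ - η • gradient f (x k ω)‖ ^ 2 ∂μ
      ≤ (1 + 1/(2*c)) * (1 + η*L)^2 * ∫ ω, ‖x k ω - x₀‖ ^ 2 ∂μ
        + (1 + 2*c) * (η^2 * G^2) := by
    intro k
    have hpt : ∀ ω, ‖x k ω - x₀ - η • gradient f (x k ω)‖ ^ 2
        ≤ (1 + 1/(2*c)) * (1 + η*L)^2 * ‖x k ω - x₀‖ ^ 2 + (1 + 2*c) * (η^2 * G^2) := by
      intro ω
      have h1 : ‖x k ω - x₀ - η • gradient f (x k ω)‖ ≤ (1 + η*L) * ‖x k ω - x₀‖ + η*G := by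
        calc ‖x k ω - x₀ - η • gradient f (x k ω)‖
            ≤ ‖x k ω - x₀‖ + ‖η • gradient f (x k ω)‖ := norm_sub_le _ _
          _ = ‖x k ω - x₀‖ + η * ‖gradient f (x k ω)‖ := by
              rw [norm_smul, Real.norm_eq_abs, abs_of_pos hη]
          _ ≤ ‖x k ω - x₀‖ + η * (G + L * ‖x k ω - x₀‖) :=
              add_le_add le_rfl (mul_le_mul_of_nonneg_left (hgradbd _) hη.le)
          _ = (1 + η*L) * ‖x k ω - x₀‖ + η*G := by ring
      have h2 : ‖x k ω - x₀ - η • gradient f (x k ω)‖ ^ 2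
          ≤ ((1 + η*L) * ‖x k ω - x₀‖ + η*G)^2 := pow_le_pow_left₀ (norm_nonneg _) h1 2
      have h3 := aux_sq_add c ((1 + η*L) * ‖x k ω - x₀‖) (η*G) hc1
      calc ‖x k ω - x₀ - η • gradient f (x k ω)‖ ^ 2
          ≤ ((1 + η*L) * ‖x k ω - x₀‖ + η*G)^2 := h2
        _ ≤ (1 + 1/(2*c)) * ((1+η*L) * ‖x k ω - x₀‖)^2 + (1+2*c) * (η*G)^2 := h3
        _ = (1 + 1/(2*c)) * (1 + η*L)^2 * ‖x k ω - x₀‖^2 + (1+2*c)*(η^2*G^2) := by ring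
    calc ∫ ω, ‖x k ω - x₀ - η • gradient f (x k ω)‖ ^ 2 ∂μ
        ≤ ∫ ω, ((1 + 1/(2*c)) * (1 + η*L)^2 * ‖x k ω - x₀‖ ^ 2
            + (1 + 2*c) * (η^2 * G^2)) ∂μ :=
          integral_mono (ha2int k)
            (((hY2int k).const_mul _).add (integrable_const _)) hpt
      _ = (1 + 1/(2*c)) * (1 + η*L)^2 * ∫ ω, ‖x k ω - x₀‖ ^ 2 ∂μ
            + (1 + 2*c) * (η^2 * G^2) := by
          rw [integral_add ((hY2int k).const_mul _) (integrable_const _),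
            integral_const_mul, integral_const, probReal_univ, one_smul]
  -- recursion constant
  have hr1 : (1:ℝ) ≤ 1 + 43/(32*c) := by
    have : (0:ℝ) < 43/(32*c) := by positivity
    linarith
  have hrec : ∀ k, ∫ ω, ‖x (k+1) ω - x₀‖ ^ 2 ∂μ
      ≤ (1 + 43/(32*c)) * ∫ ω, ‖x k ω - x₀‖ ^ 2 ∂μ
        + ((1+2*c)*(η^2*G^2) + η^2*σ^2) := by
    intro k
    have hA : (1 + 1/(2*c)) * (1 + η*L)^2 ≤ 1 + 43/(32*c) := by
      have h1 : (1 + η*L)^2 ≤ (1 + 1/(4*c))^2 :=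
        pow_le_pow_left₀ (by positivity) (by linarith) 2
      calc (1 + 1/(2*c)) * (1+η*L)^2 ≤ (1 + 1/(2*c)) * (1+1/(4*c))^2 :=
            mul_le_mul_of_nonneg_left h1 (by positivity)
        _ ≤ 1 + 43/(32*c) := aux_r_bound c hc1
    have hDnn : 0 ≤ ∫ ω, ‖x k ω - x₀‖ ^ 2 ∂μ := integral_nonneg fun ω => by positivity
    have h2 := hstep2 k
    have h4 : η^2 * ∫ ω, ‖g k ω - gradient f (x k ω)‖^2 ∂μ ≤ η^2 * σ^2 :=
      mul_le_mul_of_nonneg_left (hvarInt k) (by positivity)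
    have h5 : (1 + 1/(2*c)) * (1 + η*L)^2 * ∫ ω, ‖x k ω - x₀‖ ^ 2 ∂μ
        ≤ (1 + 43/(32*c)) * ∫ ω, ‖x k ω - x₀‖ ^ 2 ∂μ :=
      mul_le_mul_of_nonneg_right hA hDnn
    rw [hDsucc k]
    linarith
  -- induction
  have hBnn : 0 ≤ (1+2*c)*(η^2*G^2) + η^2*σ^2 := by positivity
  have hind : ∀ k, ∫ ω, ‖x k ω - x₀‖ ^ 2 ∂μ
      ≤ ((1 + 43/(32*c))^k - 1) * (32*c/43) * ((1+2*c)*(η^2*G^2) + η^2*σ^2) := by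
    intro k
    induction k with
    | zero => simp [hx0]
    | succ n ih =>
      have key : ((1 + 43/(32*c))^(n+1) - 1) * (32*c/43) * ((1+2*c)*(η^2*G^2) + η^2*σ^2)
          = (1 + 43/(32*c)) * (((1 + 43/(32*c))^n - 1) * (32*c/43)
              * ((1+2*c)*(η^2*G^2) + η^2*σ^2))
            + ((1+2*c)*(η^2*G^2) + η^2*σ^2) := by
        have hkey : (1 + 43/(32*c)) * (((1 + 43/(32*c))^n - 1) * (32*c/43)) + 1
            = ((1 + 43/(32*c))^(n+1) - 1) * (32*c/43) := by
          field_simp [hc0.ne']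
          linear_combination (-(43 + 32*c) * (c * c⁻¹ + c⁻¹ * (43 / 32)) ^ n) * mul_inv_cancel₀ hc0.ne'
        calc ((1 + 43/(32*c))^(n+1) - 1) * (32*c/43) * ((1+2*c)*(η^2*G^2) + η^2*σ^2)
            = ((1 + 43/(32*c)) * (((1 + 43/(32*c))^n - 1) * (32*c/43)) + 1)
              * ((1+2*c)*(η^2*G^2) + η^2*σ^2) := by rw [hkey]
          _ = _ := by ring
      have h6 := hrec n
      have h7 : (1 + 43/(32*c)) * (∫ ω, ‖x n ω - x₀‖^2 ∂μ)
          ≤ (1 + 43/(32*c)) * (((1 + 43/(32*c))^n - 1) * (32*c/43)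
            * ((1+2*c)*(η^2*G^2) + η^2*σ^2)) :=
        mul_le_mul_of_nonneg_left ih (by linarith)
      rw [key]
      linarith
  -- conclude
  intro k hkK
  have hSk : ((1 + 43/(32*c))^k - 1) * (32*c/43) ≤ 2.345 * c := by
    have h1 : (1 + 43/(32*c))^k ≤ (1 + 43/(32*c))^K := pow_le_pow_right₀ hr1 hkK
    have h2 : (1 + 43/(32*c))^K ≤ Real.exp (43/32) := by
      have h3 : (1 + 43/(32*c)) ≤ Real.exp (43/(32*c)) := by
        have := Real.add_one_le_exp (43/(32*c)); linarith
      have h4 : (1 + 43/(32*c))^K ≤ (Real.exp (43/(32*c)))^K :=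
        pow_le_pow_left₀ (by positivity) h3 K
      have h5 : (K:ℝ) * (43/(32*c)) = 43/32 := by
        rw [← hcdef]
        field_simp
      rwa [← Real.exp_nat_mul, h5] at h4
    have h5 := aux_exp
    have h6 : (0:ℝ) < 32*c/43 := by positivity
    nlinarith [h1, h2, h5, h6]
  have hSknn : 0 ≤ ((1 + 43/(32*c))^k - 1) * (32*c/43) := by
    have : (1:ℝ) ≤ (1 + 43/(32*c))^k := one_le_pow₀ hr1
    have h6 : (0:ℝ) ≤ 32*c/43 := by positivity
    nlinarith
  calc ∫ ω, ‖x k ω - x₀‖ ^ 2 ∂μ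
      ≤ ((1 + 43/(32*c))^k - 1) * (32*c/43) * ((1+2*c)*(η^2*G^2) + η^2*σ^2) := hind k
    _ ≤ 2.345 * c * ((1+2*c)*(η^2*G^2) + η^2*σ^2) := mul_le_mul_of_nonneg_right hSk hBnn
    _ ≤ 3.7 * c * η ^ 2 * (2 * c * G ^ 2 + σ ^ 2) := by
        nlinarith [mul_nonneg (mul_nonneg hc0.le (sq_nonneg η))
            (mul_nonneg (sub_nonneg.mpr hc1) (sq_nonneg G)),
          mul_nonneg (mul_nonneg hc0.le (sq_nonneg η)) (sq_nonneg G),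
          mul_nonneg (mul_nonneg hc0.le (sq_nonneg η)) (sq_nonneg σ)]
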